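/- In the minimal counterexample (G, C_0), let f = uvw be a 3-face with d(u) = d(v) = 3 and d(w) ≤ 5, and let u' be the pendant neighbor of u (the neighbor of u not on f). If (b(f) ∪ {u'}) ∩ C_0 = ∅, then d(u') ≥ 5. -/

import Mathlib

/-!
Common definitions for formalizing "A relaxation of the Bordeaux Conjecture"
(Liu, Li, Yu).  We model a plane graph combinatorially: a simple graph together
with a set of faces (each given by its boundary cycle, a list of vertices in
cyclic order), a distinguished outer face, and, for each cycle, the sets of
vertices drawn strictly inside and strictly outside of it.

A (2,0,0)-coloring uses colors `0, 1, 2 : Fin 3`, where color `0` is the color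
of deficiency 2 (called "color 1" in the paper) and colors `1` and `2` must
induce independent sets.
-/

variable {V : Type} [Fintype V] [DecidableEq V]

/-- `l` is the list of vertices of a cycle of `G`, in cyclic order. -/
def IsCycleList (G : SimpleGraph V) (l : List V) : Prop :=
  3 ≤ l.length ∧ l.Nodup ∧ ∀ p ∈ l.zip (l.rotate 1), G.Adj p.1 p.2

/-- Two lists represent the same cyclic sequence, up to rotation and reflection. -/
def SameCycle (l l' : List V) : Prop :=
  ∃ n : ℕ, l'.rotate n = l ∨ l'.reverse.rotate n = l

/-- `u` and `v` are consecutive vertices (i.e. joined by an edge) of the cycle `l`. -/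
def CycAdj (l : List V) (u v : V) : Prop :=
  (u, v) ∈ l.zip (l.rotate 1) ∨ (v, u) ∈ l.zip (l.rotate 1)

/-- A combinatorial model of a plane graph. -/
structure PlaneGraph (V : Type) [Fintype V] [DecidableEq V] where
  /-- the underlying abstract simple graph -/
  G : SimpleGraph V
  /-- the faces, given by their boundary cycles -/
  faces : Set (List V)
  /-- the boundary cycle of the outer (unbounded) face -/
  outer : List V
  outer_mem : outer ∈ faces
  faces_cycle : ∀ l ∈ faces, IsCycleList G l
  /-- the set of vertices strictly inside a cycle -/
  inside : List V → Set V
  /-- the set of vertices strictly outside a cycle -/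
  outside : List V → Set V
  inside_outside_cover : ∀ l, IsCycleList G l → ∀ v : V,
    v ∈ inside l ∨ v ∈ outside l ∨ v ∈ l
  inside_outside_disjoint : ∀ l, Disjoint (inside l) (outside l)
  on_cycle_not_inside_outside : ∀ l, ∀ v ∈ l, v ∉ inside l ∧ v ∉ outside l
  no_edge_inside_outside : ∀ l, IsCycleList G l →
    ∀ u ∈ inside l, ∀ v ∈ outside l, ¬ G.Adj u v
  inner_face_inside_empty : ∀ l ∈ faces, ¬ SameCycle l outer → inside l = ∅
  outer_outside_empty : outside outer = ∅

namespace PlaneGraph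

/-- `l` is the boundary cycle of a face of `P` (up to rotation/reflection). -/
def IsFace (P : PlaneGraph V) (l : List V) : Prop :=
  ∃ l' ∈ P.faces, SameCycle l l'

/-- The degree of a vertex. -/
noncomputable def deg (P : PlaneGraph V) (v : V) : ℕ :=
  {u | P.G.Adj v u}.ncard

/-- A separating cycle: there are vertices strictly inside and strictly outside. -/
def Separating (P : PlaneGraph V) (l : List V) : Prop :=
  IsCycleList P.G l ∧ (P.inside l).Nonempty ∧ (P.outside l).Nonempty

end PlaneGraph

/-- `a`, `b`, `c` span a triangle of `G`. -/
def IsTriangle (G : SimpleGraph V) (a b c : V) : Prop :=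
  G.Adj a b ∧ G.Adj b c ∧ G.Adj c a

/-- `v` is incident to (i.e. lies on) some triangle of `G`. -/
def OnTriangle (G : SimpleGraph V) (v : V) : Prop :=
  ∃ a b : V, IsTriangle G v a b

/-- `G` contains no cycle of length 5. -/
def NoFiveCycle (G : SimpleGraph V) : Prop :=
  ∀ l : List V, IsCycleList G l → l.length ≠ 5

/-- No two distinct triangles of `G` share a vertex. -/
def NoIntersectingTriangles (G : SimpleGraph V) : Prop :=
  ∀ a b c d e f : V, IsTriangle G a b c → IsTriangle G d e f →
    (({a, b, c} : Set V) ∩ ({d, e, f} : Set V)).Nonempty →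
    ({a, b, c} : Set V) = ({d, e, f} : Set V)

/-- Membership in the family `𝒢` of plane graphs with no 5-cycles and no
two triangles sharing a vertex. -/
def PlaneGraph.InFamilyG (P : PlaneGraph V) : Prop :=
  NoFiveCycle P.G ∧ NoIntersectingTriangles P.G

/-- A (2,0,0)-coloring of `G`: color `0` induces a subgraph of maximum degree
at most `2`, and colors `1` and `2` induce independent sets. -/
def IsCol200 (G : SimpleGraph V) (c : V → Fin 3) : Prop :=
  (∀ u v : V, G.Adj u v → c u ≠ 0 → c u ≠ c v) ∧
  (∀ v : V, c v = 0 → {u | G.Adj v u ∧ c u = 0}.ncard ≤ 2)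

/-- A (2,0,0)-coloring of the cycle `l`, viewed as a subgraph. -/
def IsCol200Cycle (l : List V) (c : V → Fin 3) : Prop :=
  (∀ u v : V, CycAdj l u v → c u ≠ 0 → c u ≠ c v) ∧
  (∀ v ∈ l, c v = 0 → {u | CycAdj l u v ∧ c u = 0}.ncard ≤ 2)

/-- `c` agrees with `c₀` on the cycle `l` and every vertex off `l` receives a
color different from those of all of its neighbors on `l`. -/
def SuperextendsOn (G : SimpleGraph V) (l : List V) (c₀ c : V → Fin 3) : Prop :=
  (∀ v ∈ l, c v = c₀ v) ∧ ∀ v : V, v ∉ l → ∀ u ∈ l, G.Adj v u → c v ≠ c u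

/-- `(G, l)` is superextendable: every (2,0,0)-coloring of the cycle `l` extends to
a (2,0,0)-coloring of `G` in which every vertex off `l` gets a color different from
those of all of its neighbors on `l`. -/
def Superextendable (G : SimpleGraph V) (l : List V) : Prop :=
  ∀ c₀ : V → Fin 3, IsCol200Cycle l c₀ →
    ∃ c : V → Fin 3, IsCol200 G c ∧ SuperextendsOn G l c₀ c

/-- `σ(G) = |V(G)| + |E(G)|`. -/
noncomputable def PlaneGraph.sigma (P : PlaneGraph V) : ℕ :=
  Fintype.card V + P.G.edgeSet.ncard

/-- `(P, C₀)` is a counterexample to the main theorem that minimizes `σ`: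
`P` is a plane graph in `𝒢`, `C₀` is a triangle or a 7-cycle of `P`,
`(P, C₀)` is not superextendable, and every pair `(P', C')` of this kind with
smaller `σ` is superextendable. -/
def IsMinCex (P : PlaneGraph V) (C₀ : List V) : Prop :=
  P.InFamilyG ∧ IsCycleList P.G C₀ ∧ (C₀.length = 3 ∨ C₀.length = 7) ∧
  ¬ Superextendable P.G C₀ ∧
  ∀ (n : ℕ) (P' : PlaneGraph (Fin n)) (C' : List (Fin n)),
    P'.InFamilyG → IsCycleList P'.G C' → (C'.length = 3 ∨ C'.length = 7) →
    P'.sigma < P.sigma → Superextendable P'.G C'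

/-- The graph obtained from `G` by identifying the vertices `u` and `w` (the merged
vertex is `u`; the vertex `w` becomes isolated). -/
def identify (G : SimpleGraph V) (u w : V) : SimpleGraph V where
  Adj x y := x ≠ y ∧ x ≠ w ∧ y ≠ w ∧
    (G.Adj x y ∨ (x = u ∧ G.Adj w y) ∨ (y = u ∧ G.Adj x w))
  symm := by
    refine ⟨?_⟩
    rintro x y ⟨hxy, hxw, hyw, h⟩
    refine ⟨hxy.symm, hyw, hxw, ?_⟩
    rcases h with h | ⟨hx, h⟩ | ⟨hy, h⟩
    · exact Or.inl h.symm
    · exact Or.inr (Or.inr ⟨hx, h.symm⟩)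
    · exact Or.inr (Or.inl ⟨hy, h.symm⟩)
  loopless := by
    refine ⟨?_⟩
    rintro x ⟨hxx, -⟩
    exact hxx rfl

/-- The graph obtained from `G` by deleting the vertices of `S`
(the deleted vertices become isolated). -/
def delVerts (G : SimpleGraph V) (S : Set V) : SimpleGraph V where
  Adj x y := G.Adj x y ∧ x ∉ S ∧ y ∉ S
  symm := ⟨fun _ _ h => ⟨h.1.symm, h.2.2, h.2.1⟩⟩
  loopless := ⟨fun x h => G.loopless.irrefl x h.1⟩

/-- Base special 3-faces: `(3,3,5⁻)`-faces and `(3,4,4)`-faces disjoint from `C₀`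
(the first listed vertex is a 3-vertex). -/
def IsBaseSpecial (P : PlaneGraph V) (C₀ : List V) (u v w : V) : Prop :=
  P.IsFace [u, v, w] ∧ u ∉ C₀ ∧ v ∉ C₀ ∧ w ∉ C₀ ∧ P.deg u = 3 ∧
    ((P.deg v = 3 ∧ P.deg w ≤ 5) ∨ (P.deg v = 4 ∧ P.deg w = 4))

/-- Special 3-faces of rank at most `n`, following the paper's recursive
definition: the base special faces are the `(3,3,5⁻)`- and `(3,4,4)`-faces
disjoint from `C₀`; a `(3,5,5)`-face `uvw` (disjoint from `C₀`, with `d(u)=3`)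
is special of rank `n+1` when each off-face neighbor of each of its two
5-vertices is a 3-vertex lying on a pendant special 3-face of rank at most `n`,
i.e. the two 5-vertices have six pendant special 3-faces altogether. -/
def SpecialRank (P : PlaneGraph V) (C₀ : List V) : ℕ → V → V → V → Prop
  | 0 => fun u v w => IsBaseSpecial P C₀ u v w
  | n + 1 => fun u v w =>
      SpecialRank P C₀ n u v w ∨
      (P.IsFace [u, v, w] ∧ u ∉ C₀ ∧ v ∉ C₀ ∧ w ∉ C₀ ∧
        P.deg u = 3 ∧ P.deg v = 5 ∧ P.deg w = 5 ∧
        (∀ x : V, P.G.Adj v x → x ≠ u → x ≠ w →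
          ∃ a b c : V, SpecialRank P C₀ n a b c ∧ v ≠ a ∧ v ≠ b ∧ v ≠ c ∧
            (x = a ∨ x = b ∨ x = c) ∧ P.deg x = 3) ∧
        (∀ x : V, P.G.Adj w x → x ≠ u → x ≠ v →
          ∃ a b c : V, SpecialRank P C₀ n a b c ∧ w ≠ a ∧ w ≠ b ∧ w ≠ c ∧
            (x = a ∨ x = b ∨ x = c) ∧ P.deg x = 3))

/-- `uvw` is a special 3-face (of some rank). -/
def IsSpecial (P : PlaneGraph V) (C₀ : List V) (u v w : V) : Prop :=
  ∃ n : ℕ, SpecialRank P C₀ n u v w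

/-- The set `S` is the vertex set of a special 3-face. -/
def IsSpecialOn (P : PlaneGraph V) (C₀ : List V) (S : Set V) : Prop :=
  ∃ a b c : V, IsSpecial P C₀ a b c ∧ S = {a, b, c}

/-- `S` is the vertex set of a pendant special 3-face of `y`:  a special 3-face
not containing `y` one of whose 3-vertices is adjacent to `y`. -/
def PendantSpecial (P : PlaneGraph V) (C₀ : List V) (y : V) (S : Set V) : Prop :=
  IsSpecialOn P C₀ S ∧ y ∉ S ∧ ∃ x ∈ S, P.deg x = 3 ∧ P.G.Adj y x

/-- The number of pendant special 3-faces of `y`. -/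
noncomputable def pendCount (P : PlaneGraph V) (C₀ : List V) (y : V) : ℕ :=
  {S : Set V | PendantSpecial P C₀ y S}.ncard

/-! ### Auxiliary lemmas -/

section Aux
set_option linter.unusedSectionVars false

lemma getElem_idx_congr (l : List V) {a b : ℕ} (h : a = b) (ha : a < l.length) :
    l[a]'ha = l[b]'(h ▸ ha) := by subst h; rfl

lemma mem_zip_rot {l : List V} {i : ℕ} (hi : i < l.length) :
    (l[i], l[(i+1) % l.length]'(Nat.mod_lt _ (by omega))) ∈ l.zip (l.rotate 1) := by
  rw [List.mem_iff_getElem]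
  have hz : i < (l.zip (l.rotate 1)).length := by
    simp [List.length_zip]; omega
  refine ⟨i, hz, ?_⟩
  rw [List.getElem_zip, List.getElem_rotate]

variable {G : SimpleGraph V}

lemma adj_of_zip_rot {l : List V} (hl : ∀ p ∈ l.zip (l.rotate 1), G.Adj p.1 p.2)
    {i : ℕ} (hi : i < l.length) :
    G.Adj l[i] (l[(i+1) % l.length]'(Nat.mod_lt _ (by omega))) :=
  hl _ (mem_zip_rot hi)

lemma zip_rot_mem {l : List V} {p : V × V} (hp : p ∈ l.zip (l.rotate 1)) :
    ∃ (i : ℕ) (hi : i < l.length),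
      p.1 = l[i] ∧ p.2 = l[(i+1) % l.length]'(Nat.mod_lt _ (by omega)) := by
  rw [List.mem_iff_getElem] at hp
  obtain ⟨i, hi, he⟩ := hp
  have hlen : (l.zip (l.rotate 1)).length = l.length := by simp [List.length_zip]
  rw [hlen] at hi
  refine ⟨i, hi, ?_, ?_⟩
  · rw [← he, List.getElem_zip]
  · rw [← he, List.getElem_zip]
    exact List.getElem_rotate l 1 i (by simpa using hi)

lemma isCycleList_rotate {l : List V} (h : IsCycleList G l) (n : ℕ) :
    IsCycleList G (l.rotate n) := by
  obtain ⟨h3, hnd, hadj⟩ := h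
  have hN : 0 < l.length := by omega
  refine ⟨by simpa using h3, by simpa using hnd, ?_⟩
  intro p hp
  obtain ⟨i, hi, h1, h2⟩ := zip_rot_mem hp
  rw [List.length_rotate] at hi
  have e1 : p.1 = l[(i + n) % l.length]'(Nat.mod_lt _ hN) := by
    rw [h1]; exact List.getElem_rotate l n i (by simpa using hi)
  have e2 : p.2 = l[((i + n) % l.length + 1) % l.length]'(Nat.mod_lt _ hN) := by
    rw [h2]
    have h3' := List.getElem_rotate l n ((i+1) % (l.rotate n).length)
      (by rw [List.length_rotate]; exact Nat.mod_lt _ (by omega))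
    rw [h3']
    apply getElem_idx_congr
    rw [List.length_rotate]
    conv_lhs => rw [Nat.mod_add_mod]
    conv_rhs => rw [Nat.mod_add_mod]
    congr 1
    omega
  rw [e1, e2]
  exact adj_of_zip_rot hadj (Nat.mod_lt _ hN)

lemma isCycleList_reverse {l : List V} (h : IsCycleList G l) :
    IsCycleList G l.reverse := by
  obtain ⟨h3, hnd, hadj⟩ := h
  have hN : 0 < l.length := by omega
  refine ⟨by simpa using h3, by simpa using hnd, ?_⟩
  intro p hp
  obtain ⟨i, hi, h1, h2⟩ := zip_rot_mem hp
  rw [List.length_reverse] at hi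
  have e1 : p.1 = l[l.length - 1 - i]'(by omega) := by
    rw [h1]; exact List.getElem_reverse _
  have e2 : p.2 = l[l.length - 1 - (i+1) % l.length]'(by omega) := by
    rw [h2]
    have hmod : (i+1) % l.reverse.length = (i+1) % l.length := by
      rw [List.length_reverse]
    rw [getElem_idx_congr l.reverse hmod
      (by rw [List.length_reverse]; exact Nat.mod_lt _ (by omega))]
    exact List.getElem_reverse _
  rw [e1, e2]
  rcases Nat.lt_or_ge (i+1) l.length with hc | hc
  · have hidx : l.length - 1 - (i+1) % l.length = l.length - 2 - i := by
      rw [Nat.mod_eq_of_lt hc]; omega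
    rw [getElem_idx_congr l hidx (by omega)]
    have adj := adj_of_zip_rot hadj (show l.length - 2 - i < l.length by omega)
    have hidx2 : (l.length - 2 - i + 1) % l.length = l.length - 1 - i := by
      rw [Nat.mod_eq_of_lt (by omega)]; omega
    rw [getElem_idx_congr l hidx2 (Nat.mod_lt _ hN)] at adj
    exact adj.symm
  · have hi1 : (i+1) % l.length = 0 := by
      rw [show i + 1 = l.length by omega]; simp
    have hidx : l.length - 1 - (i+1) % l.length = l.length - 1 := by rw [hi1]; omega
    rw [getElem_idx_congr l hidx (by omega),
        getElem_idx_congr l (show l.length - 1 - i = 0 by omega) (by omega)]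
    have adj := adj_of_zip_rot hadj (show l.length - 1 < l.length by omega)
    have hidx2 : (l.length - 1 + 1) % l.length = 0 := by
      rw [show l.length - 1 + 1 = l.length by omega]; simp
    rw [getElem_idx_congr l hidx2 (Nat.mod_lt _ hN)] at adj
    exact adj.symm

lemma isCycleList_of_sameCycle {l l' : List V} (hs : SameCycle l l')
    (h : IsCycleList G l') : IsCycleList G l := by
  obtain ⟨n, hn | hn⟩ := hs
  · rw [← hn]; exact isCycleList_rotate h n
  · rw [← hn]; exact isCycleList_rotate (isCycleList_reverse h) n

lemma cycle_mono {G₁ G₂ : SimpleGraph V} (hle : ∀ a b, G₁.Adj a b → G₂.Adj a b)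
    {l : List V} (hl : IsCycleList G₁ l) : IsCycleList G₂ l :=
  ⟨hl.1, hl.2.1, fun p hp => hle _ _ (hl.2.2 p hp)⟩

lemma isFace_adj (P : PlaneGraph V) {a b c : V} (hf : P.IsFace [a, b, c]) :
    P.G.Adj a b ∧ P.G.Adj b c ∧ P.G.Adj c a := by
  obtain ⟨l', hl', hs⟩ := hf
  have hcyc := isCycleList_of_sameCycle hs (P.faces_cycle l' hl')
  have hrot : [a, b, c].rotate 1 = [b, c, a] := by
    rw [List.rotate_eq_drop_append_take (by simp)]; rfl
  have hz := hcyc.2.2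
  rw [hrot] at hz
  have hzip : [a, b, c].zip [b, c, a] = [(a, b), (b, c), (c, a)] := rfl
  rw [hzip] at hz
  exact ⟨hz (a, b) (by simp), hz (b, c) (by simp), hz (c, a) (by simp)⟩

lemma zip_rot_map {W : Type} (f : V → W) (l : List V) :
    (l.map f).zip ((l.map f).rotate 1) = (l.zip (l.rotate 1)).map (Prod.map f f) := by
  rw [← List.map_rotate, List.zip_map]

lemma isCycleList_mapEquiv {W : Type} (e : V ≃ W) {G₁ : SimpleGraph V}
    {M : SimpleGraph W} (hM : ∀ x y, M.Adj (e x) (e y) ↔ G₁.Adj x y)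
    {l : List V} (hl : IsCycleList G₁ l) : IsCycleList M (l.map ⇑e) := by
  refine ⟨by simpa using hl.1, hl.2.1.map e.injective, ?_⟩
  intro p hp
  rw [zip_rot_map] at hp
  obtain ⟨⟨x, y⟩, hq, he2⟩ := List.mem_map.1 hp
  rw [← he2]
  exact (hM x y).2 (hl.2.2 _ hq)

lemma cycAdj_map_push {W : Type} (e : V ≃ W) {l : List V} {a b : V}
    (h : CycAdj l a b) : CycAdj (l.map ⇑e) (e a) (e b) := by
  rcases h with h | h
  · left; rw [zip_rot_map]; exact List.mem_map.2 ⟨(a, b), h, rfl⟩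
  · right; rw [zip_rot_map]; exact List.mem_map.2 ⟨(b, a), h, rfl⟩

lemma cycAdj_map_pull {W : Type} (e : V ≃ W) {l : List V} {x y : W}
    (h : CycAdj (l.map ⇑e) x y) : CycAdj l (e.symm x) (e.symm y) := by
  rcases h with h | h
  · rw [zip_rot_map] at h
    obtain ⟨⟨a, b⟩, hq, he2⟩ := List.mem_map.1 h
    obtain ⟨h1, h2⟩ := Prod.mk.injEq _ _ _ _ ▸ he2
    subst h1; subst h2
    simpa [Equiv.symm_apply_apply, CycAdj] using Or.inl hq
  · rw [zip_rot_map] at h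
    obtain ⟨⟨a, b⟩, hq, he2⟩ := List.mem_map.1 h
    obtain ⟨h1, h2⟩ := Prod.mk.injEq _ _ _ _ ▸ he2
    subst h1; subst h2
    simpa [Equiv.symm_apply_apply, CycAdj] using Or.inr hq

end Aux

section Transport
set_option linter.unusedSectionVars false
set_option maxHeartbeats 1000000

lemma superextendable_delVerts (P : PlaneGraph V) (C₀ : List V) (h : IsMinCex P C₀)
    (S : Set V) (hS : ∀ x ∈ C₀, x ∉ S) {a b : V} (hab : P.G.Adj a b) (haS : a ∈ S) :
    Superextendable (delVerts P.G S) C₀ := by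
  classical
  set G' := delVerts P.G S with hG'
  have hle : ∀ x y, G'.Adj x y → P.G.Adj x y := fun x y hh => hh.1
  have hC₀G : IsCycleList P.G C₀ := h.2.1
  have hC₀' : IsCycleList G' C₀ := by
    refine ⟨hC₀G.1, hC₀G.2.1, fun p hp => ?_⟩
    have hm := List.of_mem_zip hp
    exact ⟨hC₀G.2.2 p hp, hS _ hm.1, hS _ ((List.mem_rotate).1 hm.2)⟩
  set n := Fintype.card V with hn
  set e : V ≃ Fin n := Fintype.equivFin V with he
  set H : SimpleGraph (Fin n) := G'.comap ⇑e.symm with hH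
  have hHadj : ∀ x y : V, H.Adj (e x) (e y) ↔ G'.Adj x y := by
    intro x y
    simp [hH, SimpleGraph.comap_adj]
  have hHadj' : ∀ p q : Fin n, H.Adj p q ↔ G'.Adj (e.symm p) (e.symm q) :=
    fun p q => Iff.rfl
  set L : List (Fin n) := C₀.map ⇑e with hL
  have hLcyc : IsCycleList H L := isCycleList_mapEquiv e hHadj hC₀'
  set P' : PlaneGraph (Fin n) :=
    { G := H
      faces := {L}
      outer := L
      outer_mem := rfl
      faces_cycle := by
        intro l hl
        rw [Set.mem_singleton_iff] at hl
        subst hl; exact hLcyc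
      inside := fun l => {v | v ∉ l}
      outside := fun _ => ∅
      inside_outside_cover := by
        intro l _ v
        by_cases hv : v ∈ l
        · exact Or.inr (Or.inr hv)
        · exact Or.inl hv
      inside_outside_disjoint := by intro l; simp
      on_cycle_not_inside_outside := by
        intro l v hv
        exact ⟨fun hh => hh hv, fun hh => hh.elim⟩
      no_edge_inside_outside := by
        intro l _ x _ y hy
        exact absurd hy (by simp)
      inner_face_inside_empty := by
        intro l hl hns
        rw [Set.mem_singleton_iff] at hl
        subst hl
        exact absurd ⟨0, Or.inl (List.rotate_zero _)⟩ hns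
      outer_outside_empty := rfl } with hP'
  have hfam : P'.InFamilyG := by
    constructor
    · intro l hcyc
      have h1 : IsCycleList G' (l.map ⇑e.symm) :=
        isCycleList_mapEquiv e.symm (fun x y => (hHadj' x y).symm) hcyc
      have h2 : IsCycleList P.G (l.map ⇑e.symm) := cycle_mono hle h1
      have h5 := h.1.1 _ h2
      simpa using h5
    · intro x1 x2 x3 y1 y2 y3 ht1 ht2 hne
      have key := h.1.2 (e.symm x1) (e.symm x2) (e.symm x3)
        (e.symm y1) (e.symm y2) (e.symm y3)
        ⟨hle _ _ ht1.1, hle _ _ ht1.2.1, hle _ _ ht1.2.2⟩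
        ⟨hle _ _ ht2.1, hle _ _ ht2.2.1, hle _ _ ht2.2.2⟩ ?_
      · have himg := congrArg (Set.image ⇑e) key
        simpa [Set.image_insert_eq, Set.image_singleton,
          Equiv.apply_symm_apply] using himg
      · obtain ⟨z, hz1, hz2⟩ := hne
        refine ⟨e.symm z, ?_, ?_⟩
        · simp only [Set.mem_insert_iff, Set.mem_singleton_iff] at hz1 ⊢
          rcases hz1 with rfl | rfl | rfl
          · exact Or.inl rfl
          · exact Or.inr (Or.inl rfl)
          · exact Or.inr (Or.inr rfl)
        · simp only [Set.mem_insert_iff, Set.mem_singleton_iff] at hz2 ⊢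
          rcases hz2 with rfl | rfl | rfl
          · exact Or.inl rfl
          · exact Or.inr (Or.inl rfl)
          · exact Or.inr (Or.inr rfl)
  have hedge : H.edgeSet.ncard = G'.edgeSet.ncard := by
    have iso : H ≃g G' := { toEquiv := e.symm, map_rel_iff' := Iff.rfl }
    rw [← Nat.card_coe_set_eq, ← Nat.card_coe_set_eq]
    exact Nat.card_congr iso.mapEdgeSet
  have hsubset : G'.edgeSet ⊂ P.G.edgeSet := by
    constructor
    · exact SimpleGraph.edgeSet_mono (fun x y hxy => hxy.1)
    · intro hcon
      have h2 := hcon ((SimpleGraph.mem_edgeSet _).2 hab)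
      exact ((SimpleGraph.mem_edgeSet _).1 h2).2.1 haS
  have hsig : P'.sigma < P.sigma := by
    show Fintype.card (Fin n) + H.edgeSet.ncard < Fintype.card V + P.G.edgeSet.ncard
    rw [Fintype.card_fin, hedge]
    exact Nat.add_lt_add_left (Set.ncard_lt_ncard hsubset (Set.toFinite _)) _
  have hlen : L.length = 3 ∨ L.length = 7 := by
    rw [hL, List.length_map]; exact h.2.2.1
  have hsupH : Superextendable H L := h.2.2.2.2 n P' L hfam hLcyc hlen hsig
  -- pull the coloring back
  intro c₀ hc₀
  set d₀ : Fin n → Fin 3 := fun p => c₀ (e.symm p) with hd₀def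
  have hd₀ : IsCol200Cycle L d₀ := by
    constructor
    · intro x y hxy hne0
      have hpull := cycAdj_map_pull e hxy
      exact hc₀.1 _ _ hpull hne0
    · intro x hx hx0
      obtain ⟨x₁, hx₁, rfl⟩ := List.mem_map.1 hx
      have hzero : c₀ x₁ = 0 := by simpa [hd₀def] using hx0
      have hset : {y | CycAdj L y (e x₁) ∧ d₀ y = 0} =
          ⇑e '' {z | CycAdj C₀ z x₁ ∧ c₀ z = 0} := by
        ext y
        constructor
        · rintro ⟨hcy, hy0⟩
          refine ⟨e.symm y, ⟨?_, by simpa [hd₀def] using hy0⟩, by simp⟩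
          have := cycAdj_map_pull e hcy
          simpa using this
        · rintro ⟨z, ⟨hz1, hz2⟩, rfl⟩
          exact ⟨cycAdj_map_push e hz1, by simpa [hd₀def] using hz2⟩
      rw [hset, Set.ncard_image_of_injective _ e.injective]
      exact hc₀.2 x₁ hx₁ hzero
  obtain ⟨d, hd1, hd2⟩ := hsupH d₀ hd₀
  refine ⟨fun x => d (e x), ⟨?_, ?_⟩, ?_, ?_⟩
  · intro x y hxy hne0
    exact hd1.1 (e x) (e y) ((hHadj x y).2 hxy) hne0
  · intro x hx0
    have hsub : ⇑e '' {y | G'.Adj x y ∧ d (e y) = 0} ⊆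
        {q | H.Adj (e x) q ∧ d q = 0} := by
      rintro q ⟨y, ⟨hy1, hy2⟩, rfl⟩
      exact ⟨(hHadj x y).2 hy1, hy2⟩
    calc {y | G'.Adj x y ∧ d (e y) = 0}.ncard
        = (⇑e '' {y | G'.Adj x y ∧ d (e y) = 0}).ncard :=
          (Set.ncard_image_of_injective _ e.injective).symm
      _ ≤ {q | H.Adj (e x) q ∧ d q = 0}.ncard :=
          Set.ncard_le_ncard hsub (Set.toFinite _)
      _ ≤ 2 := hd1.2 (e x) hx0
  · intro z hz
    have hm : e z ∈ L := List.mem_map.2 ⟨z, hz, rfl⟩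
    have := hd2.1 (e z) hm
    simpa [hd₀def] using this
  · intro z hz x hx hadj'
    have hzL : e z ∉ L := by
      intro hmem
      obtain ⟨z₁, hz₁, hez⟩ := List.mem_map.1 hmem
      exact hz (by rwa [e.injective hez] at hz₁)
    exact hd2.2 (e z) hzL (e x) (List.mem_map.2 ⟨x, hx, rfl⟩) ((hHadj z x).2 hadj')

end Transport

section Recolor
set_option linter.unusedSectionVars false

def pick2 (a b : Fin 3) : Fin 3 :=
  if a ≠ 1 ∧ b ≠ 1 then 1 else if a ≠ 2 ∧ b ≠ 2 then 2 else 0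

def pick3 (a b c : Fin 3) : Fin 3 :=
  if a ≠ 1 ∧ b ≠ 1 ∧ c ≠ 1 then 1 else if a ≠ 2 ∧ b ≠ 2 ∧ c ≠ 2 then 2 else 0

lemma pick2_spec : ∀ a b : Fin 3,
    (pick2 a b ≠ 0 → pick2 a b ≠ a ∧ pick2 a b ≠ b) ∧
    (pick2 a b = 0 → a ≠ 0 ∧ b ≠ 0) := by decide

lemma pick3_spec : ∀ a b c : Fin 3,
    (pick3 a b c ≠ 0 → pick3 a b c ≠ a ∧ pick3 a b c ≠ b ∧ pick3 a b c ≠ c) ∧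
    (pick3 a b c = 0 →
      ((a ≠ 0 ∧ b ≠ 0) ∨ (a ≠ 0 ∧ c ≠ 0) ∨ (b ≠ 0 ∧ c ≠ 0))) := by decide

lemma neighborhood_eq_of_deg3 {G : SimpleGraph V} {x a b c : V}
    (hd : {y | G.Adj x y}.ncard = 3) (ha : G.Adj x a) (hb : G.Adj x b)
    (hc : G.Adj x c) (hab : a ≠ b) (hac : a ≠ c) (hbc : b ≠ c) :
    {y | G.Adj x y} = {a, b, c} := by
  have hsub : ({a, b, c} : Set V) ⊆ {y | G.Adj x y} := by
    intro y hy
    rcases hy with rfl | rfl | rfl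
    exacts [ha, hb, hc]
  have hcard : ({a, b, c} : Set V).ncard = 3 := by
    rw [Set.ncard_insert_of_notMem (by simp [hab, hac]) (Set.toFinite _),
      Set.ncard_pair hbc]
  exact (Set.eq_of_subset_of_ncard_le hsub (by omega) (Set.toFinite _)).symm

lemma third_neighbor {G : SimpleGraph V} {x a b : V}
    (hd : {y | G.Adj x y}.ncard = 3) (ha : G.Adj x a) (hb : G.Adj x b)
    (hab : a ≠ b) :
    ∃ z : V, {y | G.Adj x y} = {a, b, z} ∧ z ≠ a ∧ z ≠ b := by
  have hsub : ({a, b} : Set V) ⊆ {y | G.Adj x y} := by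
    intro y hy; rcases hy with rfl | rfl; exacts [ha, hb]
  have hDcard : ({y | G.Adj x y} \ {a, b}).ncard = 1 := by
    rw [Set.ncard_diff hsub (Set.toFinite _), Set.ncard_pair hab, hd]
  obtain ⟨z, hz⟩ := Set.ncard_eq_one.1 hDcard
  have hzmem : z ∈ {y | G.Adj x y} \ {a, b} := by rw [hz]; rfl
  refine ⟨z, ?_, ?_, ?_⟩
  · rw [← Set.union_diff_cancel hsub, hz]
    ext y; simp; tauto
  · intro hza; apply hzmem.2; rw [hza]; exact Or.inl rfl
  · intro hzb; apply hzmem.2; rw [hzb]; exact Or.inr rfl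

lemma recolor_step {G' : SimpleGraph V} {C₀ : List V} {c₀ c : V → Fin 3}
    (h200 : IsCol200 G' c) (hsup : SuperextendsOn G' C₀ c₀ c)
    {t : V} (ht : t ∉ C₀) (hdeg : {y | G'.Adj t y}.ncard ≤ 3) :
    ∃ c₁ : V → Fin 3, IsCol200 G' c₁ ∧ SuperextendsOn G' C₀ c₀ c₁ ∧
      (c₁ t = 0 → {y | G'.Adj t y ∧ c₁ y = 0}.ncard ≤ 1) ∧
      (∀ z : V, z ≠ t → c₁ z = c z) := by
  classical
  by_cases hfull : c t = 0 ∧ 2 ≤ {y | G'.Adj t y ∧ c y = 0}.ncard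
  case neg =>
    refine ⟨c, h200, hsup, ?_, fun z _ => rfl⟩
    intro h0
    by_contra hcon
    exact hfull ⟨h0, by omega⟩
  case pos =>
    set Z := {y | G'.Adj t y ∧ c y = 0} with hZ
    set NZ := {y | G'.Adj t y ∧ c y ≠ 0} with hNZ
    have hdisj : Disjoint Z NZ := by
      rw [Set.disjoint_left]
      rintro y ⟨_, hy0⟩ ⟨_, hy1⟩
      exact hy1 hy0
    have hunion : Z ∪ NZ = {y | G'.Adj t y} := by
      ext y
      by_cases h0 : c y = 0 <;> simp [hZ, hNZ, h0]
    have hsum := Set.ncard_union_eq hdisj (Set.toFinite _) (Set.toFinite _)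
    rw [hunion] at hsum
    have hNZ1 : NZ.ncard ≤ 1 := by omega
    have hsing : ∀ y ∈ NZ, ∀ z ∈ NZ, y = z :=
      (Set.ncard_le_one (Set.toFinite _)).1 hNZ1
    set x_t : Fin 3 :=
      if h : NZ.Nonempty then (if c h.some = 1 then 2 else 1) else 1 with hxt
    have hx0 : x_t ≠ 0 := by
      rw [hxt]; split
      · split <;> decide
      · decide
    have hxA : ∀ y ∈ NZ, c y ≠ x_t := by
      intro y hy
      have hne : NZ.Nonempty := ⟨y, hy⟩
      have hys : y = hne.some := hsing y hy _ hne.some_mem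
      rw [hxt, dif_pos hne, ← hys]
      by_cases h1 : c y = 1
      · rw [if_pos h1, h1]; decide
      · rw [if_neg h1]; exact h1
    set c₁ := Function.update c t x_t with hc₁
    have hupd : ∀ z : V, z ≠ t → c₁ z = c z := fun z hz =>
      Function.update_of_ne hz _ _
    have hupdt : c₁ t = x_t := Function.update_self _ _ _
    refine ⟨c₁, ⟨?_, ?_⟩, ⟨?_, ?_⟩, ?_, hupd⟩
    · -- independence
      intro x y hadj hx0'
      by_cases hxt' : x = t
      · subst hxt'
        have hyt : y ≠ x := hadj.ne.symm
        rw [hupdt, hupd y hyt]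
        by_cases hy0 : c y = 0
        · rw [hy0]; exact hx0
        · exact fun hh => hxA y ⟨hadj, hy0⟩ hh.symm
      · rw [hupd x hxt'] at hx0' ⊢
        by_cases hyt : y = t
        · subst hyt
          rw [hupdt]
          exact fun hh => hxA x ⟨hadj.symm, hx0'⟩ hh
        · rw [hupd y hyt]
          exact h200.1 x y hadj hx0'
    · -- degeneracy of color 0
      intro x hx0'
      have hxt' : x ≠ t := by
        intro hh; rw [hh, hupdt] at hx0'; exact hx0 hx0'
      have hsub : {y | G'.Adj x y ∧ c₁ y = 0} ⊆ {y | G'.Adj x y ∧ c y = 0} := by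
        rintro y ⟨hy1, hy2⟩
        have hyt : y ≠ t := by
          intro hh; rw [hh, hupdt] at hy2; exact hx0 hy2
        rw [hupd y hyt] at hy2
        exact ⟨hy1, hy2⟩
      calc {y | G'.Adj x y ∧ c₁ y = 0}.ncard
          ≤ {y | G'.Adj x y ∧ c y = 0}.ncard :=
            Set.ncard_le_ncard hsub (Set.toFinite _)
        _ ≤ 2 := h200.2 x (by rwa [hupd x hxt'] at hx0')
    · -- agrees on C₀
      intro z hz
      have hzt : z ≠ t := fun hh => ht (hh ▸ hz)
      rw [hupd z hzt]
      exact hsup.1 z hz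
    · -- superextension property
      intro z hz x hx hadj
      have hxt' : x ≠ t := fun hh => ht (hh ▸ hx)
      rw [hupd x hxt']
      by_cases hzt : z = t
      · subst hzt
        rw [hupdt]
        by_cases hx0' : c x = 0
        · rw [hx0']; exact hx0
        · exact fun hh => hxA x ⟨hadj, hx0'⟩ hh.symm
      · rw [hupd z hzt]
        exact hsup.2 z hz x hx hadj
    · -- invariant
      intro h0
      rw [hupdt] at h0
      exact absurd h0 hx0

end Recolor

/-- In the minimal counterexample `(G, C₀)` (with `C₀` bounding the
outer face), let `f = uvw` be a 3-face with `d(u) = d(v) = 3` and `d(w) ≤ 5`, and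
let `u'` be the pendant neighbor of `u`.  If `(b(f) ∪ {u'}) ∩ C₀ = ∅`, then
`d(u') ≥ 5`. -/

theorem mincex_335_face_pendant_neighbor_degree
    (P : PlaneGraph V) (C₀ : List V) (h : IsMinCex P C₀)
    (houter : SameCycle C₀ P.outer)
    (u v w u' : V) (hf : P.IsFace [u, v, w])
    (hdu : P.deg u = 3) (hdv : P.deg v = 3) (hdw : P.deg w ≤ 5)
    (hadj : P.G.Adj u u') (hne1 : u' ≠ v) (hne2 : u' ≠ w)
    (hC : u ∉ C₀ ∧ v ∉ C₀ ∧ w ∉ C₀ ∧ u' ∉ C₀) :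
    5 ≤ P.deg u' := by
  classical
  by_contra hcon
  push_neg at hcon
  obtain ⟨hCu, hCv, hCw, hCu'⟩ := hC
  obtain ⟨huv, hvw, hwu⟩ := isFace_adj P hf
  have huw : P.G.Adj u w := hwu.symm
  have hne_uv : u ≠ v := huv.ne
  have hne_vw : v ≠ w := hvw.ne
  have hne_uw : u ≠ w := huw.ne
  have hTuvw : IsTriangle P.G u v w := ⟨huv, hvw, hwu⟩
  have hNIT := h.1.2
  -- non-adjacencies from the no-intersecting-triangles condition
  have hwu' : ¬ P.G.Adj w u' := by
    intro hwadj
    have hT2 : IsTriangle P.G u w u' := ⟨huw, hwadj, hadj.symm⟩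
    have hkey := hNIT u v w u w u' hTuvw hT2 ⟨u, by simp, by simp⟩
    have hmem : u' ∈ ({u, v, w} : Set V) := by
      rw [hkey]; simp
    rcases hmem with hh | hh | hh
    · exact hadj.ne hh.symm
    · exact hne1 hh
    · exact hne2 hh
  have hvu' : ¬ P.G.Adj v u' := by
    intro hvadj
    have hT2 : IsTriangle P.G u v u' := ⟨huv, hvadj, hadj.symm⟩
    have hkey := hNIT u v w u v u' hTuvw hT2 ⟨u, by simp, by simp⟩
    have hmem : u' ∈ ({u, v, w} : Set V) := by
      rw [hkey]; simp
    rcases hmem with hh | hh | hh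
    · exact hadj.ne hh.symm
    · exact hne1 hh
    · exact hne2 hh
  -- neighborhood of u
  have hNu : {y | P.G.Adj u y} = {v, w, u'} :=
    neighborhood_eq_of_deg3 hdu huv huw hadj hne_vw hne1.symm hne2.symm
  have adjU : ∀ y, P.G.Adj u y → y = v ∨ y = w ∨ y = u' := by
    intro y hy
    have : y ∈ ({v, w, u'} : Set V) := hNu ▸ hy
    simpa using this
  -- third neighbor of v
  obtain ⟨v', hNv, hv'u, hv'w⟩ := third_neighbor hdv huv.symm hvw hne_uw
  have hvv' : P.G.Adj v v' := by
    have : v' ∈ {y | P.G.Adj v y} := by rw [hNv]; simp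
    exact this
  have hv'v : v' ≠ v := hvv'.ne.symm
  have adjV : ∀ y, P.G.Adj v y → y = u ∨ y = w ∨ y = v' := by
    intro y hy
    have : y ∈ ({u, w, v'} : Set V) := hNv ▸ hy
    simpa using this
  have huv' : ¬ P.G.Adj u v' := by
    intro huadj
    have hT2 : IsTriangle P.G u v v' := ⟨huv, hvv', huadj.symm⟩
    have hkey := hNIT u v w u v v' hTuvw hT2 ⟨u, by simp, by simp⟩
    have hmem : v' ∈ ({u, v, w} : Set V) := by
      rw [hkey]; simp
    rcases hmem with hh | hh | hh
    · exact hv'u hh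
    · exact hv'v hh
    · exact hv'w hh
  have hwv' : ¬ P.G.Adj w v' := by
    intro hwadj
    have hT2 : IsTriangle P.G v w v' := ⟨hvw, hwadj, hvv'.symm⟩
    have hkey := hNIT u v w v w v' hTuvw hT2 ⟨v, by simp, by simp⟩
    have hmem : v' ∈ ({u, v, w} : Set V) := by
      rw [hkey]; simp
    rcases hmem with hh | hh | hh
    · exact hv'u hh
    · exact hv'v hh
    · exact hv'w hh
  have hu'v' : u' ≠ v' := fun hh => hvu' (by rw [hh]; exact hvv')
  -- the deleted graph
  set S : Set V := {u, v} with hSdef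
  set G' := delVerts P.G S with hG'def
  have hwS : w ∉ S := by
    simp only [hSdef, Set.mem_insert_iff, Set.mem_singleton_iff]
    push_neg
    exact ⟨hne_uw.symm, hne_vw.symm⟩
  have hu'S : u' ∉ S := by
    simp only [hSdef, Set.mem_insert_iff, Set.mem_singleton_iff]
    push_neg
    exact ⟨hadj.ne.symm, hne1⟩
  have hv'S : v' ∉ S := by
    simp only [hSdef, Set.mem_insert_iff, Set.mem_singleton_iff]
    push_neg
    exact ⟨hv'u, hv'v⟩
  have hsupext : Superextendable G' C₀ := by
    refine superextendable_delVerts P C₀ h S ?_ huv ?_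
    · intro x hx
      simp only [hSdef, Set.mem_insert_iff, Set.mem_singleton_iff]
      push_neg
      exact ⟨fun hh => hCu (hh ▸ hx), fun hh => hCv (hh ▸ hx)⟩
    · simp [hSdef]
  -- the bad precoloring
  have hnsup : ¬ Superextendable P.G C₀ := h.2.2.2.1
  unfold Superextendable at hnsup
  push_neg at hnsup
  obtain ⟨c₀, hc₀, hbad⟩ := hnsup
  obtain ⟨c, hc200, hcsup⟩ := hsupext c₀ hc₀
  -- degree bounds in G'
  have hdegw' : {y | G'.Adj w y}.ncard ≤ 3 := by
    have hNw' : {y | G'.Adj w y} = {y | P.G.Adj w y} \ S := by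
      ext y
      constructor
      · rintro ⟨h1, _, h3⟩; exact ⟨h1, h3⟩
      · rintro ⟨h1, h3⟩; exact ⟨h1, hwS, h3⟩
    have hsub2 : S ⊆ {y | P.G.Adj w y} := by
      intro x hx
      rcases hx with rfl | rfl
      · exact hwu
      · exact hvw.symm
    have hS2 : S.ncard = 2 := Set.ncard_pair hne_uv
    have hw5 : {y | P.G.Adj w y}.ncard ≤ 5 := hdw
    rw [hNw', Set.ncard_diff hsub2 (Set.toFinite _), hS2]
    omega
  have hdegu'' : {y | G'.Adj u' y}.ncard ≤ 3 := by
    have hNu'' : {y | G'.Adj u' y} = {y | P.G.Adj u' y} \ {u} := by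
      ext y
      constructor
      · rintro ⟨h1, _, h3⟩
        refine ⟨h1, ?_⟩
        intro hh
        apply h3
        rw [hh, hSdef]
        exact Or.inl rfl
      · rintro ⟨h1, h3⟩
        refine ⟨h1, hu'S, ?_⟩
        intro hy
        rcases hy with rfl | rfl
        · exact h3 rfl
        · exact hvu' h1.symm
    have hsub2 : ({u} : Set V) ⊆ {y | P.G.Adj u' y} := by
      intro x hx
      rcases hx with rfl
      exact hadj.symm
    have hu4 : {y | P.G.Adj u' y}.ncard ≤ 4 := by
      have : P.deg u' ≤ 4 := by omega
      exact this
    rw [hNu'', Set.ncard_diff hsub2 (Set.toFinite _), Set.ncard_singleton]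
    omega
  -- recolor w and u' if needed
  obtain ⟨c₁, hc₁200, hc₁sup, hinv_w, hc₁eq⟩ := recolor_step hc200 hcsup hCw hdegw'
  obtain ⟨c₂, hc₂200, hc₂sup, hinv_u', hc₂eq⟩ :=
    recolor_step hc₁200 hc₁sup hCu' hdegu''
  have hne_wu' : w ≠ u' := fun hh => hne2 hh.symm
  have hinv_w2 : c₂ w = 0 → {y | G'.Adj w y ∧ c₂ y = 0}.ncard ≤ 1 := by
    intro h0
    have hseteq : {y | G'.Adj w y ∧ c₂ y = 0} = {y | G'.Adj w y ∧ c₁ y = 0} := by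
      ext y
      have hyu' : G'.Adj w y → y ≠ u' := by
        intro hy hh
        exact hwu' (hh ▸ hy.1)
      constructor
      · rintro ⟨h1, h2⟩
        exact ⟨h1, by rw [← hc₂eq y (hyu' h1)]; exact h2⟩
      · rintro ⟨h1, h2⟩
        exact ⟨h1, by rw [hc₂eq y (hyu' h1)]; exact h2⟩
    rw [hseteq]
    exact hinv_w (by rw [← hc₂eq w hne_wu']; exact h0)
  -- the extension
  set colv := pick2 (c₂ w) (c₂ v') with hcolvdef
  set colu := pick3 (c₂ w) (c₂ u') colv with hcoludef
  set c' : V → Fin 3 := fun z => if z = u then colu else if z = v then colv else c₂ z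
    with hc'def
  have hc'u : c' u = colu := by simp [hc'def]
  have hc'v : c' v = colv := by simp [hc'def, hne_uv.symm]
  have hc'z : ∀ z, z ≠ u → z ≠ v → c' z = c₂ z := by
    intro z h1 h2
    simp [hc'def, h1, h2]
  have hc'w : c' w = c₂ w := hc'z w hne_uw.symm hne_vw.symm
  have hc'u' : c' u' = c₂ u' := hc'z u' hadj.ne.symm hne1
  have hc'v' : c' v' = c₂ v' := hc'z v' hv'u hv'v
  have hv_spec := pick2_spec (c₂ w) (c₂ v')
  have hu_spec := pick3_spec (c₂ w) (c₂ u') colv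
  -- G'-adjacency helper
  have hG'of : ∀ x y, P.G.Adj x y → x ≠ u → x ≠ v → y ≠ u → y ≠ v → G'.Adj x y := by
    intro x y hxy hx1 hx2 hy1 hy2
    refine ⟨hxy, ?_, ?_⟩
    · rw [hSdef]; intro hh; rcases hh with rfl | rfl
      · exact hx1 rfl
      · exact hx2 rfl
    · rw [hSdef]; intro hh; rcases hh with rfl | rfl
      · exact hy1 rfl
      · exact hy2 rfl
  -- (I) independence
  have hIndep : ∀ x y : V, P.G.Adj x y → c' x ≠ 0 → c' x ≠ c' y := by
    intro x y hxy hx0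
    by_cases hxu : x = u
    · rw [hxu] at hxy hx0 ⊢
      rw [hc'u] at hx0 ⊢
      rcases adjU y hxy with rfl | rfl | rfl
      · rw [hc'v]; exact ((hu_spec.1 hx0).2.2)
      · rw [hc'w]; exact ((hu_spec.1 hx0).1)
      · rw [hc'u']; exact ((hu_spec.1 hx0).2.1)
    · by_cases hxv : x = v
      · rw [hxv] at hxy hx0 ⊢
        rw [hc'v] at hx0 ⊢
        rcases adjV y hxy with rfl | rfl | rfl
        · rw [hc'u]
          by_cases hu0 : colu = 0
          · rw [hu0]; exact hx0
          · exact fun hh => (hu_spec.1 hu0).2.2 hh.symm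
        · rw [hc'w]; exact (hv_spec.1 hx0).1
        · rw [hc'v']; exact (hv_spec.1 hx0).2
      · rw [hc'z x hxu hxv] at hx0 ⊢
        by_cases hyu : y = u
        · rw [hyu] at hxy ⊢
          rw [hc'u]
          rcases adjU x hxy.symm with rfl | rfl | rfl
          · exact absurd rfl hxv
          · by_cases hu0 : colu = 0
            · rw [hu0]; exact hx0
            · exact fun hh => (hu_spec.1 hu0).1 hh.symm
          · by_cases hu0 : colu = 0
            · rw [hu0]; exact hx0
            · exact fun hh => (hu_spec.1 hu0).2.1 hh.symm
        · by_cases hyv : y = v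
          · rw [hyv] at hxy ⊢
            rw [hc'v]
            rcases adjV x hxy.symm with rfl | rfl | rfl
            · exact absurd rfl hxu
            · by_cases hv0 : colv = 0
              · rw [hv0]; exact hx0
              · exact fun hh => (hv_spec.1 hv0).1 hh.symm
            · by_cases hv0 : colv = 0
              · rw [hv0]; exact hx0
              · exact fun hh => (hv_spec.1 hv0).2 hh.symm
          · rw [hc'z y hyu hyv]
            exact hc₂200.1 x y (hG'of x y hxy hxu hxv hyu hyv) hx0
  -- (II) color-0 degeneracy
  have hDeg : ∀ x : V, c' x = 0 → {y | P.G.Adj x y ∧ c' y = 0}.ncard ≤ 2 := by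
    intro x hx0
    by_cases hxu : x = u
    · rw [hxu, hc'u] at hx0
      rcases hu_spec.2 hx0 with ⟨h1, h2⟩ | ⟨h1, h2⟩ | ⟨h1, h2⟩
      · have hsub : {y | P.G.Adj x y ∧ c' y = 0} ⊆ {v} := by
          rintro y ⟨hy1, hy2⟩
          rw [hxu] at hy1
          rcases adjU y hy1 with rfl | rfl | rfl
          · rfl
          · rw [hc'w] at hy2; exact absurd hy2 h1
          · rw [hc'u'] at hy2; exact absurd hy2 h2
        calc {y | P.G.Adj x y ∧ c' y = 0}.ncard ≤ ({v} : Set V).ncard :=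
            Set.ncard_le_ncard hsub (Set.toFinite _)
          _ ≤ 2 := by rw [Set.ncard_singleton]; omega
      · have hsub : {y | P.G.Adj x y ∧ c' y = 0} ⊆ {u'} := by
          rintro y ⟨hy1, hy2⟩
          rw [hxu] at hy1
          rcases adjU y hy1 with rfl | rfl | rfl
          · rw [hc'v] at hy2; exact absurd hy2 h2
          · rw [hc'w] at hy2; exact absurd hy2 h1
          · rfl
        calc {y | P.G.Adj x y ∧ c' y = 0}.ncard ≤ ({u'} : Set V).ncard :=
            Set.ncard_le_ncard hsub (Set.toFinite _)
          _ ≤ 2 := by rw [Set.ncard_singleton]; omega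
      · have hsub : {y | P.G.Adj x y ∧ c' y = 0} ⊆ {w} := by
          rintro y ⟨hy1, hy2⟩
          rw [hxu] at hy1
          rcases adjU y hy1 with rfl | rfl | rfl
          · rw [hc'v] at hy2; exact absurd hy2 h2
          · rfl
          · rw [hc'u'] at hy2; exact absurd hy2 h1
        calc {y | P.G.Adj x y ∧ c' y = 0}.ncard ≤ ({w} : Set V).ncard :=
            Set.ncard_le_ncard hsub (Set.toFinite _)
          _ ≤ 2 := by rw [Set.ncard_singleton]; omega
    · by_cases hxv : x = v
      · rw [hxv, hc'v] at hx0
        obtain ⟨h1, h2⟩ := hv_spec.2 hx0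
        have hsub : {y | P.G.Adj x y ∧ c' y = 0} ⊆ {u} := by
          rintro y ⟨hy1, hy2⟩
          rw [hxv] at hy1
          rcases adjV y hy1 with rfl | rfl | rfl
          · rfl
          · rw [hc'w] at hy2; exact absurd hy2 h1
          · rw [hc'v'] at hy2; exact absurd hy2 h2
        calc {y | P.G.Adj x y ∧ c' y = 0}.ncard ≤ ({u} : Set V).ncard :=
            Set.ncard_le_ncard hsub (Set.toFinite _)
          _ ≤ 2 := by rw [Set.ncard_singleton]; omega
      · by_cases hxw : x = w
        · rw [hxw, hc'w] at hx0
          have hcolv0 : colv ≠ 0 := fun hh => (hv_spec.2 hh).1 hx0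
          have hsub : {y | P.G.Adj x y ∧ c' y = 0} ⊆
              {y | G'.Adj w y ∧ c₂ y = 0} ∪ {u} := by
            rintro y ⟨hy1, hy2⟩
            rw [hxw] at hy1
            by_cases hyu : y = u
            · right; rw [hyu]; rfl
            · by_cases hyv : y = v
              · rw [hyv, hc'v] at hy2; exact absurd hy2 hcolv0
              · left
                refine ⟨hG'of w y hy1 hne_uw.symm hne_vw.symm hyu hyv, ?_⟩
                rw [← hc'z y hyu hyv]; exact hy2
          calc {y | P.G.Adj x y ∧ c' y = 0}.ncard
              ≤ ({y | G'.Adj w y ∧ c₂ y = 0} ∪ {u}).ncard :=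
                Set.ncard_le_ncard hsub (Set.toFinite _)
            _ ≤ {y | G'.Adj w y ∧ c₂ y = 0}.ncard + ({u} : Set V).ncard :=
                Set.ncard_union_le _ _
            _ ≤ 1 + 1 := by
                have := hinv_w2 hx0
                rw [Set.ncard_singleton]
                omega
            _ ≤ 2 := by omega
        · by_cases hxu' : x = u'
          · rw [hxu', hc'u'] at hx0
            have hsub : {y | P.G.Adj x y ∧ c' y = 0} ⊆
                {y | G'.Adj u' y ∧ c₂ y = 0} ∪ {u} := by
              rintro y ⟨hy1, hy2⟩
              rw [hxu'] at hy1
              by_cases hyu : y = u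
              · right; rw [hyu]; rfl
              · by_cases hyv : y = v
                · rw [hyv] at hy1; exact absurd hy1.symm hvu'
                · left
                  refine ⟨hG'of u' y hy1 hadj.ne.symm hne1 hyu hyv, ?_⟩
                  rw [← hc'z y hyu hyv]; exact hy2
            calc {y | P.G.Adj x y ∧ c' y = 0}.ncard
                ≤ ({y | G'.Adj u' y ∧ c₂ y = 0} ∪ {u}).ncard :=
                  Set.ncard_le_ncard hsub (Set.toFinite _)
              _ ≤ {y | G'.Adj u' y ∧ c₂ y = 0}.ncard + ({u} : Set V).ncard :=
                  Set.ncard_union_le _ _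
              _ ≤ 1 + 1 := by
                  have := hinv_u' hx0
                  rw [Set.ncard_singleton]
                  omega
              _ ≤ 2 := by omega
          · by_cases hxv' : x = v'
            · rw [hxv', hc'v'] at hx0
              have hcolv0 : colv ≠ 0 := fun hh => (hv_spec.2 hh).2 hx0
              have hsub : {y | P.G.Adj x y ∧ c' y = 0} ⊆
                  {y | G'.Adj v' y ∧ c₂ y = 0} := by
                rintro y ⟨hy1, hy2⟩
                rw [hxv'] at hy1
                by_cases hyu : y = u
                · rw [hyu] at hy1; exact absurd hy1.symm huv'
                · by_cases hyv : y = v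
                  · rw [hyv, hc'v] at hy2; exact absurd hy2 hcolv0
                  · refine ⟨hG'of v' y hy1 hv'u hv'v hyu hyv, ?_⟩
                    rw [← hc'z y hyu hyv]; exact hy2
              calc {y | P.G.Adj x y ∧ c' y = 0}.ncard
                  ≤ {y | G'.Adj v' y ∧ c₂ y = 0}.ncard :=
                    Set.ncard_le_ncard hsub (Set.toFinite _)
                _ ≤ 2 := hc₂200.2 v' hx0
            · -- fully generic vertex
              rw [hc'z x hxu hxv] at hx0
              have hsub : {y | P.G.Adj x y ∧ c' y = 0} ⊆
                  {y | G'.Adj x y ∧ c₂ y = 0} := by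
                rintro y ⟨hy1, hy2⟩
                by_cases hyu : y = u
                · exfalso
                  rw [hyu] at hy1
                  rcases adjU x hy1.symm with rfl | rfl | rfl
                  · exact hxv rfl
                  · exact hxw rfl
                  · exact hxu' rfl
                · by_cases hyv : y = v
                  · exfalso
                    rw [hyv] at hy1
                    rcases adjV x hy1.symm with rfl | rfl | rfl
                    · exact hxu rfl
                    · exact hxw rfl
                    · exact hxv' rfl
                  · refine ⟨hG'of x y hy1 hxu hxv hyu hyv, ?_⟩
                    rw [← hc'z y hyu hyv]; exact hy2
              calc {y | P.G.Adj x y ∧ c' y = 0}.ncard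
                  ≤ {y | G'.Adj x y ∧ c₂ y = 0}.ncard :=
                    Set.ncard_le_ncard hsub (Set.toFinite _)
                _ ≤ 2 := hc₂200.2 x hx0
  -- (S) superextension
  have hAgree : ∀ z ∈ C₀, c' z = c₀ z := by
    intro z hz
    have hzu : z ≠ u := fun hh => hCu (hh ▸ hz)
    have hzv : z ≠ v := fun hh => hCv (hh ▸ hz)
    rw [hc'z z hzu hzv]
    exact hc₂sup.1 z hz
  have hSup2 : ∀ z, z ∉ C₀ → ∀ x ∈ C₀, P.G.Adj z x → c' z ≠ c' x := by
    intro z hz x hx hzx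
    have hxu : x ≠ u := fun hh => hCu (hh ▸ hx)
    have hxv : x ≠ v := fun hh => hCv (hh ▸ hx)
    rw [hc'z x hxu hxv]
    by_cases hzu : z = u
    · exfalso
      rw [hzu] at hzx
      rcases adjU x hzx with rfl | rfl | rfl
      · exact hCv hx
      · exact hCw hx
      · exact hCu' hx
    · by_cases hzv : z = v
      · rw [hzv, hc'v]
        rw [hzv] at hzx
        rcases adjV x hzx with rfl | rfl | rfl
        · exact absurd rfl hxu
        · exact absurd hx hCw
        · by_cases hv0 : colv = 0
          · rw [hv0]; exact fun hh => (hv_spec.2 hv0).2 hh.symm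
          · exact (hv_spec.1 hv0).2
      · rw [hc'z z hzu hzv]
        have hzS : z ≠ u ∧ z ≠ v := ⟨hzu, hzv⟩
        exact hc₂sup.2 z hz x hx (hG'of z x hzx hzu hzv hxu hxv)
  exact hbad c' ⟨hIndep, hDeg⟩ ⟨hAgree, hSup2⟩
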